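/- Let φ : ℝ → ℝ be an even Schwartz function whose Fourier transform φ̂ is supported in [−1,1], and for t > 0 set φ*_t(x) := Σ_{n∈ℤ} φ((x − 2πn)·t). Then for all integers l ≥ 0 and m ≥ 0 there is a constant C_{l,m} > 0 such that for all t ≥ 1 and all x ∈ ℝ, (1 + t²(1 − cos x))^l · t^{−m} · |(d/dx)^m φ*_t(x)| ≤ C_{l,m}. -/

import Mathlib

open MeasureTheory Real

lemma summable_c : Summable (fun n : ℤ => ((1:ℝ) + (n:ℝ)^2)⁻¹) := by
  have h2 : Summable (fun n : ℕ => 1 / ((n:ℝ))^2) :=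
    Real.summable_one_div_nat_pow.2 one_lt_two
  have h3 : Summable (fun n : ℕ => 2 * (1 / (((n:ℝ))+1)^2)) := by
    have := (summable_nat_add_iff (f := fun n : ℕ => 1 / ((n:ℝ))^2) 1).2 h2
    exact (by simpa using this : Summable (fun n : ℕ => 1 / (((n:ℝ))+1)^2)).mul_left 2
  have hnat : Summable (fun n : ℕ => ((1:ℝ) + (n:ℝ)^2)⁻¹) := by
    apply h3.of_nonneg_of_le (fun n => by positivity)
    intro n
    have h := inv_anti₀ (show (0:ℝ) < ((n:ℝ)+1)^2/2 by positivity)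
      (show ((n:ℝ)+1)^2/2 ≤ 1+(n:ℝ)^2 by nlinarith [sq_nonneg ((n:ℝ)-1)])
    calc ((1:ℝ) + (n:ℝ)^2)⁻¹ ≤ (((n:ℝ)+1)^2/2)⁻¹ := h
      _ = 2 * (1 / (((n:ℝ))+1)^2) := by rw [inv_div]; ring
  apply Summable.of_nat_of_neg <;> simpa using hnat

lemma key_ineq {y : ℝ} (hy : |y| ≤ 5) (n : ℤ) :
    (1:ℝ) + (n:ℝ)^2 ≤ (1 + |y - 2*π*n|)^2 := by
  rcases eq_or_ne n 0 with h | h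
  · subst h
    push_cast
    nlinarith [abs_nonneg (y - 2*π*0)]
  · have h1 : (1:ℝ) ≤ |(n:ℝ)| := by exact_mod_cast Int.one_le_abs h
    have hpi : (3:ℝ) ≤ π := by linarith [Real.pi_gt_three]
    have h2 : 2*π*|(n:ℝ)| - |y| ≤ |y - 2*π*n| := by
      have ha : |2*π*(n:ℝ)| - |y| ≤ |2*π*(n:ℝ) - y| := abs_sub_abs_le_abs_sub _ _
      have hb : |2*π*(n:ℝ)| = 2*π*|(n:ℝ)| := by
        rw [abs_mul, abs_of_pos (by positivity : (0:ℝ) < 2*π)]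
      rw [abs_sub_comm] at ha
      linarith [hb ▸ ha]
    have h3 : 2*|(n:ℝ)| ≤ 1 + |y - 2*π*n| := by nlinarith
    have h4 : 1 + (n:ℝ)^2 ≤ (2*|(n:ℝ)|)^2 := by
      have := sq_abs (n:ℝ); nlinarith
    nlinarith [abs_nonneg (y - 2*π*n), abs_nonneg (n:ℝ)]

lemma schwartz_decay (φ : SchwartzMap ℝ ℝ) (m N : ℕ) :
    ∃ C : ℝ, 0 < C ∧ ∀ u : ℝ, (1+|u|)^N * |iteratedDeriv m (⇑φ) u| ≤ C := by
  refine ⟨2 ^ N * (Finset.Iic (N, m)).sup (fun p => SchwartzMap.seminorm ℝ p.1 p.2) φ + 1,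
    by positivity, fun u => ?_⟩
  have h := SchwartzMap.one_add_le_sup_seminorm_apply (𝕜 := ℝ) (m := (N, m))
    (le_refl N) (le_refl m) φ u
  rw [norm_iteratedFDeriv_eq_norm_iteratedDeriv] at h
  simp only [Real.norm_eq_abs] at h
  linarith

lemma term_bound (φ : SchwartzMap ℝ ℝ) (k : ℕ) {C : ℝ}
    (hC : ∀ u : ℝ, (1+|u|)^2 * |iteratedDeriv k (⇑φ) u| ≤ C)
    {t : ℝ} (ht : 1 ≤ t) {y : ℝ} (hy : |y| ≤ 5) (n : ℤ) :
    |iteratedDeriv k (⇑φ) ((y - 2*π*n) * t)| ≤ C * ((1:ℝ) + (n:ℝ)^2)⁻¹ := by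
  have hn : (0:ℝ) < 1 + (n:ℝ)^2 := by positivity
  rw [← div_eq_mul_inv, le_div_iff₀ hn]
  have h1 : (1:ℝ) + (n:ℝ)^2 ≤ (1 + |(y - 2*π*n) * t|)^2 := by
    refine (key_ineq hy n).trans ?_
    have h2 : |y - 2*π*n| ≤ |(y - 2*π*n) * t| := by
      rw [abs_mul, abs_of_pos (by linarith : (0:ℝ) < t)]
      nlinarith [abs_nonneg (y - 2*π*n)]
    gcongr
  calc |iteratedDeriv k (⇑φ) ((y - 2*π*n) * t)| * (1 + (n:ℝ)^2)
      ≤ |iteratedDeriv k (⇑φ) ((y - 2*π*n) * t)| * (1 + |(y - 2*π*n) * t|)^2 := by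
        gcongr
    _ = (1 + |(y - 2*π*n) * t|)^2 * |iteratedDeriv k (⇑φ) ((y - 2*π*n) * t)| := mul_comm _ _
    _ ≤ C := hC _

lemma deriv_identity (φ : SchwartzMap ℝ ℝ) {t : ℝ} (ht : 1 ≤ t) (m : ℕ) :
    ∀ x ∈ Metric.ball (0:ℝ) 4,
      iteratedDeriv m (fun y => ∑' n : ℤ, φ ((y - 2*π*n) * t)) x
        = ∑' n : ℤ, t^m * iteratedDeriv m (⇑φ) ((x - 2*π*n) * t) := by
  have ht0 : (0:ℝ) < t := lt_of_lt_of_le one_pos ht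
  have hball : ∀ y : ℝ, y ∈ Metric.ball (0:ℝ) 4 → |y| ≤ 5 := by
    intro y hy; rw [Metric.mem_ball, dist_zero_right, Real.norm_eq_abs] at hy; linarith
  have h04 : (0:ℝ) ∈ Metric.ball (0:ℝ) 4 := by
    rw [Metric.mem_ball, dist_self]; norm_num
  induction m with
  | zero =>
    intro x hx
    simp [iteratedDeriv_zero]
  | succ m IH =>
    intro x hx
    obtain ⟨C, hCpos, hC⟩ := schwartz_decay φ (m+1) 2
    obtain ⟨C0, hC0pos, hC0⟩ := schwartz_decay φ m 2
    have hu : Summable (fun n : ℤ => t^(m+1) * (C * ((1:ℝ)+(n:ℝ)^2)⁻¹)) :=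
      (summable_c.mul_left C).mul_left _
    have hder : ∀ (n : ℤ) (y : ℝ), y ∈ Metric.ball (0:ℝ) 4 →
        HasDerivAt (fun z => t^m * iteratedDeriv m (⇑φ) ((z - 2*π*n) * t))
          (t^(m+1) * iteratedDeriv (m+1) (⇑φ) ((y - 2*π*n) * t)) y := by
      intro n y _
      have hdiff : Differentiable ℝ (iteratedDeriv m (⇑φ)) :=
        (φ.smooth ⊤).differentiable_iteratedDeriv m (by exact_mod_cast ENat.coe_lt_top m)
      have h1 : HasDerivAt (fun z : ℝ => (z - 2*π*n) * t) t y := by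
        simpa using ((hasDerivAt_id y).sub_const (2*π*(n:ℝ))).mul_const t
      have h2 : HasDerivAt (iteratedDeriv m (⇑φ))
          (iteratedDeriv (m+1) (⇑φ) ((y - 2*π*n) * t)) ((y - 2*π*n) * t) := by
        have h2' := (hdiff ((y - 2*π*n) * t)).hasDerivAt
        rwa [show deriv (iteratedDeriv m (⇑φ)) ((y - 2*π*n) * t)
            = iteratedDeriv (m+1) (⇑φ) ((y - 2*π*n) * t) from
          (congrFun iteratedDeriv_succ ((y - 2*π*n) * t)).symm] at h2'
      have h4 := (h2.comp y h1).const_mul (t^m)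
      have h5 : t^(m+1) * iteratedDeriv (m+1) (⇑φ) ((y - 2*π*n) * t)
          = t^m * (iteratedDeriv (m+1) (⇑φ) ((y - 2*π*n) * t) * t) := by ring
      rw [h5]; exact h4
    have hb : ∀ (n : ℤ) (y : ℝ), y ∈ Metric.ball (0:ℝ) 4 →
        ‖t^(m+1) * iteratedDeriv (m+1) (⇑φ) ((y - 2*π*n) * t)‖
          ≤ t^(m+1) * (C * ((1:ℝ)+(n:ℝ)^2)⁻¹) := by
      intro n y hy
      rw [Real.norm_eq_abs, abs_mul, abs_of_pos (by positivity : (0:ℝ) < t^(m+1))]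
      exact mul_le_mul_of_nonneg_left (term_bound φ (m+1) hC ht (hball y hy) n) (by positivity)
    have h0 : Summable (fun n : ℤ => t^m * iteratedDeriv m (⇑φ) ((0 - 2*π*n) * t)) := by
      apply Summable.of_norm_bounded ((summable_c.mul_left C0).mul_left (t^m))
      intro n
      rw [Real.norm_eq_abs, abs_mul, abs_of_pos (by positivity : (0:ℝ) < t^m)]
      exact mul_le_mul_of_nonneg_left
        (term_bound φ m hC0 ht (by rw [abs_zero]; norm_num : |(0:ℝ)| ≤ 5) n) (by positivity)
    have key := hasDerivAt_tsum_of_isPreconnected hu Metric.isOpen_ball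
      (convex_ball (0:ℝ) 4).isPreconnected hder hb h04 h0 hx
    rw [iteratedDeriv_succ]
    have heq : deriv (iteratedDeriv m (fun y => ∑' n : ℤ, φ ((y - 2*π*n) * t))) x
        = deriv (fun z => ∑' n : ℤ, t^m * iteratedDeriv m (⇑φ) ((z - 2*π*n) * t)) x := by
      apply Filter.EventuallyEq.deriv_eq
      filter_upwards [Metric.isOpen_ball.mem_nhds hx] with z hz using IH z hz
    rw [heq, key.deriv]

lemma one_sub_cos_le (x : ℝ) : 1 - Real.cos x ≤ x^2 / 2 := by
  have h1 : Real.cos x = 1 - 2*Real.sin (x/2)^2 := by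
    have h := Real.cos_two_mul' (x/2)
    rw [show 2*(x/2) = x by ring] at h
    have h2 := Real.sin_sq_add_cos_sq (x/2)
    linarith
  have h3 : |Real.sin (x/2)| ≤ |x/2| := Real.abs_sin_le_abs
  have h4 : Real.sin (x/2)^2 ≤ (x/2)^2 := by
    rw [← sq_abs (Real.sin (x/2)), ← sq_abs (x/2)]
    exact pow_le_pow_left₀ (abs_nonneg _) h3 2
  nlinarith

/-- The Fourier transform with the convention `φ̂(k) = (2π)⁻¹ ∫ φ(x) e^{−i k x} dx`. -/
noncomputable def fourierHat (f : ℝ → ℝ) (k : ℝ) : ℂ :=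
  (2 * Real.pi : ℂ)⁻¹ * ∫ x : ℝ, (f x : ℂ) * Complex.exp (-(Complex.I * k * x))

theorem stmt3 (φ : SchwartzMap ℝ ℝ) (hφ_even : ∀ x : ℝ, φ (-x) = φ x)
    (hhat_supp : ∀ k : ℝ, k ∉ Set.Icc (-1 : ℝ) 1 → fourierHat (fun x => φ x) k = 0) :
    ∀ l m : ℕ, ∃ C : ℝ, 0 < C ∧ ∀ t : ℝ, 1 ≤ t → ∀ x : ℝ,
      (1 + t ^ 2 * (1 - Real.cos x)) ^ l * (t ^ m)⁻¹ *
        |iteratedDeriv m (fun y : ℝ => ∑' n : ℤ, φ ((y - 2 * Real.pi * n) * t)) x| ≤ C := by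
  intro l m
  obtain ⟨C₀, hC₀pos, hC₀⟩ := schwartz_decay φ m (2*l+2)
  obtain ⟨C₁, hC₁pos, hC₁⟩ := schwartz_decay φ m 2
  set S : ℝ := ∑' n : ℤ, ((1:ℝ) + (n:ℝ)^2)⁻¹ with hS
  have hSnn : 0 ≤ S := tsum_nonneg (fun n => by positivity)
  refine ⟨C₀ * S + 1, by positivity, fun t ht x => ?_⟩
  have ht0 : (0:ℝ) < t := lt_of_lt_of_le one_pos ht
  set k : ℤ := round (x / (2*π)) with hk
  set x₀ : ℝ := x - 2*π*k with hx₀def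
  have hx₀ : |x₀| ≤ π := by
    have h1 : |x / (2*π) - k| ≤ 1/2 := abs_sub_round (x / (2*π))
    have h2 : x₀ = 2*π * (x/(2*π) - k) := by
      rw [hx₀def]; field_simp
    rw [h2, abs_mul, abs_of_pos (by positivity : (0:ℝ) < 2*π)]
    nlinarith [Real.pi_pos]
  have hxball : x₀ ∈ Metric.ball (0:ℝ) 4 := by
    rw [Metric.mem_ball, dist_zero_right, Real.norm_eq_abs]
    linarith [Real.pi_lt_d2]
  have hxeq : x = x₀ + 2*π*k := by rw [hx₀def]; ring
  set F : ℝ → ℝ := fun y => ∑' n : ℤ, φ ((y - 2*π*n) * t) with hF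
  -- periodicity
  have hper : ∀ y : ℝ, F (y + 2*π*k) = F y := by
    intro y
    calc F (y + 2*π*k) = ∑' n : ℤ, φ ((y - 2*π*((n - k : ℤ) : ℝ)) * t) := by
          apply tsum_congr; intro n; congr 1; push_cast; ring
      _ = F y := (Equiv.subRight k).tsum_eq (fun n : ℤ => φ ((y - 2*π*(n:ℝ)) * t))
  have hcos : Real.cos x = Real.cos x₀ := by
    rw [hxeq, show x₀ + 2*π*(k:ℝ) = x₀ + (k:ℝ)*(2*π) by ring, Real.cos_add_int_mul_two_pi]
  have hshift : iteratedDeriv m F x = iteratedDeriv m F x₀ := by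
    have h2 := congrFun (iteratedDeriv_comp_add_const m F (2*π*(k:ℝ))) x₀
    have h3 : (fun z => F (z + 2*π*(k:ℝ))) = F := funext hper
    rw [hxeq, ← h2, h3]
  have hid := deriv_identity φ ht m x₀ hxball
  rw [hshift, hcos]
  rw [show iteratedDeriv m F x₀ = ∑' n : ℤ, t^m * iteratedDeriv m (⇑φ) ((x₀ - 2*π*n) * t)
    from hid]
  set W : ℝ := 1 + t^2 * (1 - Real.cos x₀) with hW
  have hWnn : (0:ℝ) ≤ W := by
    have := Real.cos_le_one x₀; nlinarith
  have hx05 : |x₀| ≤ 5 := by linarith [Real.pi_lt_d2]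
  -- summability of |ψ terms|
  have hsum1 : Summable (fun n : ℤ => |iteratedDeriv m (⇑φ) ((x₀ - 2*π*n) * t)|) :=
    Summable.of_nonneg_of_le (fun n => abs_nonneg _)
      (fun n => term_bound φ m hC₁ ht hx05 n) (summable_c.mul_left C₁)
  -- per-term estimate
  have hterm : ∀ n : ℤ, W^l * |iteratedDeriv m (⇑φ) ((x₀ - 2*π*n) * t)|
      ≤ C₀ * ((1:ℝ) + (n:ℝ)^2)⁻¹ := by
    intro n
    set v : ℝ := (x₀ - 2*π*n) * t with hv
    have habs : |v| = t * |x₀ - 2*π*n| := by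
      rw [hv, abs_mul, abs_of_pos ht0]; ring
    have h5 : |x₀ - 2*π*(n:ℝ)| ≤ |v| := by
      rw [habs]; nlinarith [abs_nonneg (x₀ - 2*π*(n:ℝ))]
    have h6 : |x₀| ≤ |x₀ - 2*π*(n:ℝ)| := by
      rcases eq_or_ne n 0 with h | h
      · subst h; simp
      · have h1 : (1:ℝ) ≤ |(n:ℝ)| := by exact_mod_cast Int.one_le_abs h
        have hb : |2*π*(n:ℝ)| = 2*π*|(n:ℝ)| := by
          rw [abs_mul, abs_of_pos (by positivity : (0:ℝ) < 2*π)]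
        have ha : |2*π*(n:ℝ)| - |x₀| ≤ |x₀ - 2*π*(n:ℝ)| := by
          have hc := abs_sub_abs_le_abs_sub (2*π*(n:ℝ)) x₀
          rwa [abs_sub_comm (2*π*(n:ℝ)) x₀] at hc
        nlinarith [Real.pi_gt_three]
    -- W ≤ (1+|v|)^2
    have hW2 : W ≤ (1 + |v|)^2 := by
      have h7 := one_sub_cos_le x₀
      have h8 : t * |x₀| ≤ |v| := by
        calc t * |x₀| ≤ t * |x₀ - 2*π*(n:ℝ)| := by nlinarith
          _ = |v| := habs.symm
      have h9 : t^2 * x₀^2 = (t*|x₀|)^2 := by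
        rw [mul_pow, sq_abs]
      have h7' : t^2*(1 - Real.cos x₀) ≤ t^2 * (x₀^2/2) :=
        mul_le_mul_of_nonneg_left h7 (sq_nonneg t)
      have h8' : (t*|x₀|)^2 ≤ |v|^2 :=
        pow_le_pow_left₀ (by positivity) h8 2
      have e1 : t^2*(1 - Real.cos x₀) ≤ |v|^2/2 := by
        have e2 : t^2 * (x₀^2/2) = (t*|x₀|)^2/2 := by
          rw [mul_pow, sq_abs]; ring
        linarith
      have e3 : (1 + |v|)^2 = 1 + 2*|v| + |v|^2 := by ring
      rw [hW, e3]
      linarith [abs_nonneg v, sq_abs v, sq_nonneg v]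
    have h10 : (1:ℝ) + (n:ℝ)^2 ≤ (1 + |v|)^2 :=
      (key_ineq hx05 n).trans (by gcongr)
    have hpos : (0:ℝ) < 1 + (n:ℝ)^2 := by positivity
    rw [← div_eq_mul_inv, le_div_iff₀ hpos]
    calc W^l * |iteratedDeriv m (⇑φ) v| * (1 + (n:ℝ)^2)
        ≤ ((1+|v|)^2)^l * |iteratedDeriv m (⇑φ) v| * (1+|v|)^2 := by
          gcongr
      _ = (1+|v|)^(2*l+2) * |iteratedDeriv m (⇑φ) v| := by
          rw [← pow_mul]; ring
      _ ≤ C₀ := hC₀ v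
  -- main chain
  have hsum2 : Summable (fun n : ℤ => W^l * |iteratedDeriv m (⇑φ) ((x₀ - 2*π*n) * t)|) :=
    hsum1.mul_left _
  have htm : (0:ℝ) < t^m := by positivity
  rw [tsum_mul_left, abs_mul, abs_of_pos htm]
  have hcancel : W^l * (t^m)⁻¹ * (t^m * |∑' n : ℤ, iteratedDeriv m (⇑φ) ((x₀ - 2*π*n) * t)|)
      = W^l * |∑' n : ℤ, iteratedDeriv m (⇑φ) ((x₀ - 2*π*n) * t)| := by
    rw [mul_assoc, inv_mul_cancel_left₀ htm.ne']
  rw [hcancel]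
  calc W^l * |∑' n : ℤ, iteratedDeriv m (⇑φ) ((x₀ - 2*π*n) * t)|
      ≤ W^l * ∑' n : ℤ, |iteratedDeriv m (⇑φ) ((x₀ - 2*π*n) * t)| := by
        have htsum : |∑' n : ℤ, iteratedDeriv m (⇑φ) ((x₀ - 2*π*n) * t)|
            ≤ ∑' n : ℤ, |iteratedDeriv m (⇑φ) ((x₀ - 2*π*n) * t)| := by
          have hh := norm_tsum_le_tsum_norm
            (f := fun n : ℤ => iteratedDeriv m (⇑φ) ((x₀ - 2*π*(n:ℝ)) * t))
            (by simpa [Real.norm_eq_abs] using hsum1)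
          simpa [Real.norm_eq_abs] using hh
        exact mul_le_mul_of_nonneg_left htsum (pow_nonneg hWnn l)
    _ = ∑' n : ℤ, W^l * |iteratedDeriv m (⇑φ) ((x₀ - 2*π*n) * t)| := (tsum_mul_left).symm
    _ ≤ ∑' n : ℤ, C₀ * ((1:ℝ) + (n:ℝ)^2)⁻¹ := Summable.tsum_le_tsum hterm hsum2 (summable_c.mul_left C₀)
    _ = C₀ * S := tsum_mul_left
    _ ≤ C₀ * S + 1 := by linarith
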